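/- Let d ≥ 3. For any v₀ ∈ ℝ^d and any δ > 0, the support of Q₊(1_{B(v₀,δ)}, 1_{B(v₀,δ)}) equals the closed ball B(v₀, √2 δ). More precisely, for any 0 < χ < 1 there exists a universal constant κ₀ > 0 (independent of v₀, δ, χ) such that Q₊(1_{B(v₀,δ)}, 1_{B(v₀,δ)})(ξ) ≥ κ₀ δ^{d+1} χ^{d+1} 1_{B(v₀, (1−χ)√2 δ)}(ξ) for all δ > 0 and all ξ ∈ ℝ^d. -/

import Mathlib

noncomputable section

open MeasureTheory Real Metric Filter Set ENNReal RealInnerProductSpace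

namespace BallisticAnnihilation


/-- Velocity space: `d`-dimensional Euclidean space. -/
abbrev V (d : ℕ) := EuclideanSpace ℝ (Fin d)

/-- Japanese bracket `⟨ξ⟩ = (1+|ξ|²)^{1/2}`. -/
def jap {d : ℕ} (ξ : V d) : ℝ := Real.sqrt (1 + ‖ξ‖ ^ 2)

/-- The normalized uniform (probability) measure on the unit sphere of `ℝ^d`, realized as
the image of the normalized Lebesgue measure on the unit ball under `x ↦ x/‖x‖`. -/
def sphMeas (d : ℕ) : Measure (V d) :=
  Measure.map (fun x : V d => ‖x‖⁻¹ • x)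
    ((volume (ball (0 : V d) 1))⁻¹ • volume.restrict (ball (0 : V d) 1))

/-- Post-collisional velocity `v' = (v+w)/2 + (|v-w|/2) σ`. -/
def vP {d : ℕ} (v w σ : V d) : V d := (2:ℝ)⁻¹ • (v + w) + (‖v - w‖ / 2) • σ

/-- Post-collisional velocity `v'_* = (v+w)/2 - (|v-w|/2) σ`. -/
def vPs {d : ℕ} (v w σ : V d) : V d := (2:ℝ)⁻¹ • (v + w) - (‖v - w‖ / 2) • σ

/-- The hard-spheres Boltzmann collision operator `Q(g,f)`. -/
def Qcol {d : ℕ} (g f : V d → ℝ) (v : V d) : ℝ :=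
  ∫ w, (∫ σ, ‖v - w‖ * (g (vP v w σ) * f (vPs v w σ) - g v * f w) ∂(sphMeas d)) ∂volume

/-- The gain part `Q₊(g,f)` of the collision operator. -/
def Qplus {d : ℕ} (g f : V d → ℝ) (v : V d) : ℝ :=
  ∫ w, (∫ σ, ‖v - w‖ * (g (vP v w σ) * f (vPs v w σ)) ∂(sphMeas d)) ∂volume

/-- The loss part `Q₋(g,f)` of the collision operator. -/
def Qminus {d : ℕ} (g f : V d → ℝ) (v : V d) : ℝ :=
  g v * ∫ w, f w * ‖v - w‖

/-- The Maxwellian `M(ξ) = π^{-d/2} e^{-|ξ|²}`. -/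
def Maxw (d : ℕ) (ξ : V d) : ℝ := Real.pi ^ (-(d:ℝ)/2) * Real.exp (-‖ξ‖ ^ 2)

/-- Mass `∫ g`. -/
def massOf {d : ℕ} (g : V d → ℝ) : ℝ := ∫ v, g v

/-- Bulk velocity `u = (∫ g)⁻¹ ∫ g v dv`. -/
def velOf {d : ℕ} (g : V d → ℝ) : V d := (massOf g)⁻¹ • ∫ v, g v • v

/-- Temperature `T = (d ∫ g)⁻¹ ∫ g |v-u|² dv`. -/
def tempOf (d : ℕ) (g : V d → ℝ) : ℝ :=
  ((d : ℝ) * massOf g)⁻¹ * ∫ v, g v * ‖v - velOf g‖ ^ 2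

def nf {d : ℕ} (f : ℝ → V d → ℝ) (t : ℝ) : ℝ := massOf (f t)

def uf {d : ℕ} (f : ℝ → V d → ℝ) (t : ℝ) : V d := velOf (f t)

def Tf (d : ℕ) (f : ℝ → V d → ℝ) (t : ℝ) : ℝ := tempOf d (f t)

/-- Centered moment `M_k(t) = ∫ f(t,v) |v - u_f(t)|^k dv`. -/
def Mom {d : ℕ} (f : ℝ → V d → ℝ) (k : ℝ) (t : ℝ) : ℝ := ∫ v, f t v * ‖v - uf f t‖ ^ k

/-- `E_f(t) = M₀(t) M₂(t) = d n_f(t)² T_f(t)`. -/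
def Ef {d : ℕ} (f : ℝ → V d → ℝ) (t : ℝ) : ℝ := Mom f 0 t * Mom f 2 t

/-- `f` is the (unique, nonnegative) solution of the ballistic annihilation equation
`∂ₜ f = (1-α) Q(f,f) - α Q₋(f,f)` with initial datum `f₀`. -/
structure IsSol (d : ℕ) (α : ℝ) (f₀ : V d → ℝ) (f : ℝ → V d → ℝ) : Prop where
  init : ∀ v, f 0 v = f₀ v
  nonneg : ∀ t, 0 ≤ t → ∀ v, 0 ≤ f t v
  mem : ∀ t, 0 ≤ t → Integrable (fun v => f t v * jap v ^ (3:ℝ))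
  eqn : ∀ v t, 0 ≤ t → HasDerivWithinAt (fun s => f s v)
    ((1 - α) * Qcol (f t) (f t) v - α * Qminus (f t) (f t) v) (Set.Ici 0) t

/-- Coefficient `A = -(α/2) ∫ (d+2-2|ξ|²) Q₋(φ,φ)(ξ) dξ`. -/
def Acoef {d : ℕ} (α : ℝ) (φ : V d → ℝ) : ℝ :=
  -(α/2) * ∫ ξ, ((d:ℝ) + 2 - 2 * ‖ξ‖ ^ 2) * Qminus φ φ ξ

/-- Coefficient `B = -(α/2) ∫ (1-(2/d)|ξ|²) Q₋(φ,φ)(ξ) dξ`. -/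
def Bcoef {d : ℕ} (α : ℝ) (φ : V d → ℝ) : ℝ :=
  -(α/2) * ∫ ξ, (1 - (2/(d:ℝ)) * ‖ξ‖ ^ 2) * Qminus φ φ ξ

/-- The product `B·v = -α ∫ ξ Q₋(φ,φ)(ξ) dξ`. -/
def BVcoef {d : ℕ} (α : ℝ) (φ : V d → ℝ) : V d :=
  (-α) • ∫ ξ, Qminus φ φ ξ • ξ

/-- `a = (dB - A)/α`. -/
def acoef {d : ℕ} (α : ℝ) (φ : V d → ℝ) : ℝ := ((d:ℝ) * Bcoef α φ - Acoef α φ) / α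

/-- `b = ((d+2)B - A)/α`. -/
def bcoef {d : ℕ} (α : ℝ) (φ : V d → ℝ) : ℝ := (((d:ℝ) + 2) * Bcoef α φ - Acoef α φ) / α

/-- The time rescaling `τ(t) = √2 ∫₀ᵗ n_f(s) √(T_f(s)) ds`. -/
def tauS (d : ℕ) (f : ℝ → V d → ℝ) (t : ℝ) : ℝ :=
  Real.sqrt 2 * ∫ s in (0:ℝ)..t, nf f s * Real.sqrt (Tf d f s)

/-- The self-similar scaling relation
`f(t,v) = n_f(t) (2T_f(t))^{-d/2} ψ(τ(t), (v-u_f(t))/√(2T_f(t)))`. -/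
def ScalingRel (d : ℕ) (f ψ : ℝ → V d → ℝ) : Prop :=
  ∀ t, 0 ≤ t → ∀ v, f t v = nf f t * (2 * Tf d f t) ^ (-(d:ℝ)/2) *
    ψ (tauS d f t) ((Real.sqrt (2 * Tf d f t))⁻¹ • (v - uf f t))

/-- The rescaled initial datum `ψ₀(ξ) = (2T₀)^{d/2} n₀⁻¹ f₀(√(2T₀) ξ + u₀)`. -/
def rescaledInit (d : ℕ) (f₀ : V d → ℝ) : V d → ℝ := fun ξ =>
  (2 * tempOf d f₀) ^ ((d:ℝ)/2) * (massOf f₀)⁻¹ *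
    f₀ (Real.sqrt (2 * tempOf d f₀) • ξ + velOf f₀)

/-- `ψ` is the (unique, conservative) solution of the rescaled equation
`∂τ ψ + (A_ψ - dB_ψ) ψ + B_ψ div((ξ - v_ψ)ψ) = (1-α) Q(ψ,ψ) - α Q₋(ψ,ψ)`
(written in non-divergence form) with initial datum `ψ₀`. -/
structure IsRescaledSol (d : ℕ) (α : ℝ) (ψ₀ : V d → ℝ) (ψ : ℝ → V d → ℝ) : Prop where
  init : ∀ ξ, ψ 0 ξ = ψ₀ ξ
  nonneg : ∀ t, 0 ≤ t → ∀ ξ, 0 ≤ ψ t ξ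
  mem : ∀ t, 0 ≤ t → Integrable (fun ξ => ψ t ξ * jap ξ ^ (3:ℝ))
  mass : ∀ t, 0 ≤ t → (∫ ξ, ψ t ξ) = 1
  momentum : ∀ t, 0 ≤ t → (∫ ξ, ψ t ξ • ξ) = 0
  energy : ∀ t, 0 ≤ t → (∫ ξ, ψ t ξ * ‖ξ‖ ^ 2) = (d:ℝ)/2
  eqn : ∀ ξ t, 0 ≤ t → HasDerivWithinAt (fun s => ψ s ξ)
    ((1 - α) * Qcol (ψ t) (ψ t) ξ - α * Qminus (ψ t) (ψ t) ξ
      - Acoef α (ψ t) * ψ t ξ - Bcoef α (ψ t) * fderiv ℝ (ψ t) ξ ξ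
      + fderiv ℝ (ψ t) ξ (BVcoef α (ψ t))) (Set.Ici 0) t

/-- `ψa` is the self-similar profile: the smooth radially symmetric steady solution of
`A_α ψ + B_α ξ·∇ψ = (1-α)Q(ψ,ψ) - αQ₋(ψ,ψ)` with unit mass, zero momentum, energy `d/2`. -/
structure IsProfile (d : ℕ) (α : ℝ) (ψa : V d → ℝ) : Prop where
  nonneg : ∀ ξ, 0 ≤ ψa ξ
  smooth : ∀ n : ℕ, ContDiff ℝ n ψa
  radial : ∀ ξ ζ : V d, ‖ξ‖ = ‖ζ‖ → ψa ξ = ψa ζ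
  mem : Integrable (fun ξ => ψa ξ * jap ξ ^ (3:ℝ))
  mass : (∫ ξ, ψa ξ) = 1
  momentum : (∫ ξ, ψa ξ • ξ) = 0
  energy : (∫ ξ, ψa ξ * ‖ξ‖ ^ 2) = (d:ℝ)/2
  steady : ∀ ξ, Acoef α ψa * ψa ξ + Bcoef α ψa * fderiv ℝ ψa ξ ξ
    = (1 - α) * Qcol ψa ψa ξ - α * Qminus ψa ψa ξ

/-- The elastic linearized Boltzmann operator `L₀ h = Q(h,M) + Q(M,h)`. -/
def elasticL {d : ℕ} (h : V d → ℝ) : V d → ℝ := fun ξ =>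
  Qcol h (Maxw d) ξ + Qcol (Maxw d) h ξ

/-- The orthogonal projection (in `L²(M⁻¹)`) onto the kernel
`span{M, ξ₁M, …, ξ_d M, |ξ|² M}` of `L₀`. -/
def P0proj (d : ℕ) (h : V d → ℝ) (ξ : V d) : ℝ :=
  ((∫ x, h x * (((d:ℝ) + 2)/2 - ‖x‖ ^ 2)) + 2 * ⟪(∫ x, h x • x), ξ⟫
    + (∫ x, h x * ((2/(d:ℝ)) * ‖x‖ ^ 2 - 1)) * ‖ξ‖ ^ 2) * Maxw d ξ

/-- The spectral gap `μ⋆` of the elastic linearized operator `L₀` in `L²(M⁻¹)`,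
characterized through its Dirichlet form. -/
def specGap (d : ℕ) : ℝ :=
  sSup {μ : ℝ | 0 < μ ∧ ∀ h : V d → ℝ,
    Integrable (fun ξ => (1 + ‖ξ‖) * h ξ ^ 2 / Maxw d ξ) →
    μ * ∫ ξ, (h ξ - P0proj d h ξ) ^ 2 / Maxw d ξ ≤ ∫ ξ, -(elasticL h ξ) * h ξ / Maxw d ξ}

/-- Fourier transform of a (weighted) real function on `ℝ^d`. -/
def fourierW {d : ℕ} (g : V d → ℝ) (ξ : V d) : ℂ :=
  ∫ x, Complex.exp (-(2 * Real.pi * ⟪x, ξ⟫ : ℝ) * Complex.I) * (g x : ℂ)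

/-- Membership in the weighted Sobolev space `H^s_η(ℝ^d)`. -/
def MemHsW {d : ℕ} (s η : ℝ) (f : V d → ℝ) : Prop :=
  MemLp f 2 volume ∧
  Integrable (fun ξ : V d => ‖fourierW (fun x => f x * jap x ^ η) ξ‖ ^ 2 * jap ξ ^ (2 * s))

section SpreadProof

variable {d : ℕ}

lemma measurable_unitproj : Measurable fun x : V d => ‖x‖⁻¹ • x :=
  (measurable_norm.inv).smul measurable_id

lemma volB_ne_zero : volume (ball (0 : V d) 1) ≠ 0 :=
  (measure_ball_pos _ _ one_pos).ne'

lemma volB_ne_top : volume (ball (0 : V d) 1) ≠ ⊤ := measure_ball_lt_top.ne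

lemma sphMeas_apply {s : Set (V d)} (hs : MeasurableSet s) :
    sphMeas d s = (volume (ball (0 : V d) 1))⁻¹ *
      volume ((fun x : V d => ‖x‖⁻¹ • x) ⁻¹' s ∩ ball 0 1) := by
  rw [sphMeas, Measure.map_apply measurable_unitproj hs, Measure.smul_apply,
    Measure.restrict_apply (measurable_unitproj hs), smul_eq_mul]

lemma norm_unitproj {x : V d} (hx : x ≠ 0) : ‖‖x‖⁻¹ • x‖ = 1 := by
  rw [norm_smul, norm_inv, norm_norm, inv_mul_cancel₀ (norm_ne_zero_iff.2 hx)]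

def betaD (d : ℕ) : ℝ := (1/10) * (1/(4*(d:ℝ)))^(d-2)

lemma betaD_pos (hd : 3 ≤ d) : 0 < betaD d := by
  have h : (0:ℝ) < (d:ℝ) := by exact_mod_cast Nat.lt_of_lt_of_le (by norm_num) hd
  unfold betaD; positivity

set_option maxHeartbeats 1000000 in
lemma band_lemma (hd : 3 ≤ d) (a : V d) {τ : ℝ} (hτ : 0 < τ) (hτ' : τ ≤ 1/4) :
    ENNReal.ofReal (betaD d * τ) ≤
      volume (ball (0:V d) 1) *
        sphMeas d {σ : V d | |⟪a, σ⟫| ≤ ‖a‖ * τ ∧ ‖σ‖ ≤ 1} := by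
  have hdR : (3:ℝ) ≤ (d:ℝ) := by exact_mod_cast hd
  have hGm : MeasurableSet {σ : V d | |⟪a, σ⟫| ≤ ‖a‖ * τ ∧ ‖σ‖ ≤ 1} := by
    rw [Set.setOf_and]
    exact ((isClosed_le (continuous_abs.comp
        (Continuous.inner continuous_const continuous_id)) continuous_const).measurableSet).inter
      ((isClosed_le continuous_norm continuous_const).measurableSet)
  obtain ⟨i0, i1, hi01⟩ : ∃ i0 i1 : Fin d, i1 ≠ i0 :=
    ⟨⟨0, by omega⟩, ⟨1, by omega⟩, by simp [Fin.ext_iff]⟩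
  -- basis adapted to a
  obtain ⟨b, hb⟩ : ∃ b : OrthonormalBasis (Fin d) ℝ (V d),
      ∀ x : V d, |⟪a, x⟫| ≤ ‖a‖ * |b.repr x i0| := by
    rcases eq_or_ne a 0 with rfl | ha
    · exact ⟨EuclideanSpace.basisFun (Fin d) ℝ, fun x => by simp⟩
    · have h1 : Orthonormal ℝ (({i0} : Set (Fin d)).restrict fun _ => ‖a‖⁻¹ • a) := by
        constructor
        · intro i; exact norm_unitproj ha
        · intro i j hij
          exact absurd (Subtype.ext (i.2.trans j.2.symm)) hij
      obtain ⟨b, hb0⟩ := h1.exists_orthonormalBasis_extension_of_card_eq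
        (by simp [finrank_euclideanSpace_fin]) 
      refine ⟨b, fun x => ?_⟩
      have hbi0 : b i0 = ‖a‖⁻¹ • a := hb0 i0 rfl
      have ha' : a = ‖a‖ • (‖a‖⁻¹ • a) := by
        rw [smul_smul, mul_inv_cancel₀ (norm_ne_zero_iff.2 ha), one_smul]
      rw [b.repr_apply_apply, hbi0]
      calc |⟪a, x⟫| = |⟪‖a‖ • (‖a‖⁻¹ • a), x⟫| := by rw [← ha']
        _ = ‖a‖ * |⟪‖a‖⁻¹ • a, x⟫| := by
            rw [real_inner_smul_left, abs_mul, abs_of_nonneg (norm_nonneg a)]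
        _ ≤ ‖a‖ * |⟪‖a‖⁻¹ • a, x⟫| := le_refl _
  -- the box region
  let I : Fin d → Set ℝ := fun i =>
    if i = i0 then Icc (-(τ/2)) (τ/2) else if i = i1 then Icc (3/5) (7/10)
      else Icc 0 (1/(4*(d:ℝ)))
  have hIm : ∀ i, MeasurableSet (I i) := fun i => by
    simp only [I]; split_ifs <;> exact measurableSet_Icc
  have hpim : MeasurableSet (Set.pi univ I) := MeasurableSet.univ_pi hIm
  set e := (MeasurableEquiv.toLp 2 (Fin d → ℝ)).symm with he
  set R : Set (V d) := b.repr ⁻¹' (e ⁻¹' Set.pi univ I) with hR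
  have hvolR : volume R = ENNReal.ofReal (betaD d * τ) := by
    rw [hR, (b.measurePreserving_repr).measure_preimage
        ((e.measurable hpim).nullMeasurableSet),
      (EuclideanSpace.volume_preserving_symm_measurableEquiv_toLp (Fin d)).measure_preimage
        hpim.nullMeasurableSet,
      volume_pi_pi]
    rw [← Finset.mul_prod_erase Finset.univ _ (Finset.mem_univ i0),
      ← Finset.mul_prod_erase _ _ (Finset.mem_erase.2 ⟨hi01, Finset.mem_univ i1⟩)]
    have hIi0 : I i0 = Icc (-(τ/2)) (τ/2) := if_pos rfl
    have hIi1 : I i1 = Icc (3/5) (7/10) := by simp only [I]; rw [if_neg hi01]; simp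
    have hrest : ∀ i ∈ (Finset.univ.erase i0).erase i1,
        volume (I i) = ENNReal.ofReal (1/(4*(d:ℝ))) := by
      intro i hi
      rw [Finset.mem_erase] at hi
      obtain ⟨hine1, hi0'⟩ := hi
      rw [Finset.mem_erase] at hi0'
      simp only [I]; rw [if_neg hi0'.1, if_neg hine1, Real.volume_Icc]; norm_num
    have hcard : ((Finset.univ.erase i0).erase i1).card = d - 2 := by
      rw [Finset.card_erase_of_mem (Finset.mem_erase.2 ⟨hi01, Finset.mem_univ i1⟩),
        Finset.card_erase_of_mem (Finset.mem_univ i0), Finset.card_univ, Fintype.card_fin]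
      omega
    rw [Finset.prod_congr rfl hrest, Finset.prod_const, hcard, hIi0, hIi1,
      Real.volume_Icc, Real.volume_Icc, ← ENNReal.ofReal_pow (by positivity),
      ← ENNReal.ofReal_mul (by norm_num), ← ENNReal.ofReal_mul (by linarith)]
    congr 1
    unfold betaD
    ring
  have hsub : R ⊆ (fun x : V d => ‖x‖⁻¹ • x) ⁻¹'
      {σ : V d | |⟪a, σ⟫| ≤ ‖a‖ * τ ∧ ‖σ‖ ≤ 1} ∩ ball 0 1 := by
    intro x hx
    have hmem : ∀ i, b.repr x i ∈ I i := by
      rw [hR, Set.mem_preimage, Set.mem_preimage, Set.mem_univ_pi] at hx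
      exact hx
    set y := b.repr x with hy
    have hnormxy : ‖x‖ = ‖y‖ := (b.repr.norm_map x).symm
    have hn2 : ‖y‖^2 = ∑ i, (y i)^2 := by
      rw [EuclideanSpace.norm_eq, Real.sq_sqrt (Finset.sum_nonneg fun i _ => by positivity)]
      exact Finset.sum_congr rfl fun i _ => by rw [Real.norm_eq_abs, sq_abs]
    have hsplit : ∑ i, (y i)^2
        = (y i0)^2 + ((y i1)^2 + ∑ i ∈ (Finset.univ.erase i0).erase i1, (y i)^2) := by
      rw [Finset.add_sum_erase _ (fun i => (y i)^2)
          (Finset.mem_erase.2 ⟨hi01, Finset.mem_univ i1⟩),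
        Finset.add_sum_erase _ (fun i => (y i)^2) (Finset.mem_univ i0)]
    have h0 : |y i0| ≤ τ/2 := by
      have := hmem i0
      rw [show I i0 = Icc (-(τ/2)) (τ/2) from if_pos rfl, Set.mem_Icc] at this
      exact abs_le.2 this
    have h1 : y i1 ∈ Icc (3/5 : ℝ) (7/10) := by
      have := hmem i1
      rwa [show I i1 = Icc (3/5) (7/10) by simp only [I]; rw [if_neg hi01]; simp] at this
    have hrest' : ∑ i ∈ (Finset.univ.erase i0).erase i1, (y i)^2
        ≤ ((Finset.univ.erase i0).erase i1).card • ((1/(4*(d:ℝ)))^2) := by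
      refine Finset.sum_le_card_nsmul _ _ _ (fun i hi => ?_)
      rw [Finset.mem_erase] at hi
      obtain ⟨hine1, hi0'⟩ := hi
      rw [Finset.mem_erase] at hi0'
      have hIi := hmem i
      rw [show I i = Icc 0 (1/(4*(d:ℝ))) by
        simp only [I]; rw [if_neg hi0'.1, if_neg hine1], Set.mem_Icc] at hIi
      exact pow_le_pow_left₀ hIi.1 hIi.2 2
    have hcardle : (((Finset.univ.erase i0).erase i1).card : ℝ) ≤ (d:ℝ) := by
      have h := Finset.card_le_univ ((Finset.univ.erase i0).erase i1)
      have h2 : (Finset.univ : Finset (Fin d)).card = d := by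
        rw [Finset.card_univ, Fintype.card_fin]
      exact_mod_cast h.trans_eq h2
    have hdpos : (0:ℝ) < (d:ℝ) := by linarith
    have hsq : (1/(4*(d:ℝ)))^2 ≤ (1/12) * (1/(4*(d:ℝ))) := by
      rw [pow_two]
      apply mul_le_mul_of_nonneg_right _ (by positivity)
      rw [div_le_div_iff₀ (by positivity) (by norm_num)]
      linarith
    have hrest2 : ∑ i ∈ (Finset.univ.erase i0).erase i1, (y i)^2 ≤ 1/48 := by
      have h2 : (((Finset.univ.erase i0).erase i1).card : ℝ) • ((1/(4*(d:ℝ)))^2)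
          ≤ (d:ℝ) * ((1/12) * (1/(4*(d:ℝ)))) := by
        rw [smul_eq_mul]
        exact mul_le_mul hcardle hsq (by positivity) (le_of_lt hdpos)
      have h3 : (d:ℝ) * ((1/12) * (1/(4*(d:ℝ)))) = 1/48 := by
        field_simp
        ring
      calc ∑ i ∈ (Finset.univ.erase i0).erase i1, (y i)^2
          ≤ ((Finset.univ.erase i0).erase i1).card • ((1/(4*(d:ℝ)))^2) := hrest'
        _ = (((Finset.univ.erase i0).erase i1).card : ℝ) • ((1/(4*(d:ℝ)))^2) := by
            rw [nsmul_eq_mul]; rfl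
        _ ≤ 1/48 := by rw [← h3]; exact h2
    have hub : ‖x‖^2 ≤ 16/25 := by
      rw [hnormxy, hn2, hsplit]
      have e0 : (y i0)^2 ≤ 1/64 := by
        rw [← sq_abs]
        nlinarith [abs_nonneg (y i0), hτ']
      have e1 : (y i1)^2 ≤ 49/100 := by nlinarith [h1.1, h1.2]
      linarith
    have hlb : (1/4 : ℝ) ≤ ‖x‖^2 := by
      rw [hnormxy, hn2]
      calc (1/4:ℝ) ≤ (y i1)^2 := by nlinarith [h1.1, h1.2]
        _ ≤ ∑ i, (y i)^2 :=
            Finset.single_le_sum (f := fun i => (y i)^2)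
              (fun i _ => by positivity) (Finset.mem_univ i1)
    have hxu : ‖x‖ ≤ 4/5 := by nlinarith [norm_nonneg x]
    have hxl : 1/2 ≤ ‖x‖ := by nlinarith [norm_nonneg x]
    have hx0 : x ≠ 0 := by
      intro h
      rw [h, norm_zero] at hxl
      norm_num at hxl
    refine ⟨⟨?_, ?_⟩, ?_⟩
    · show |⟪a, ‖x‖⁻¹ • x⟫| ≤ ‖a‖ * τ
      rw [real_inner_smul_right, abs_mul, abs_of_nonneg (inv_nonneg.2 (norm_nonneg x))]
      have hinv : ‖x‖⁻¹ ≤ 2 := by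
        rw [show (2:ℝ) = (1/2)⁻¹ by norm_num]
        exact inv_anti₀ (by norm_num) hxl
      calc ‖x‖⁻¹ * |⟪a, x⟫| ≤ 2 * (‖a‖ * (τ/2)) :=
            mul_le_mul hinv ((hb x).trans
              (mul_le_mul_of_nonneg_left h0 (norm_nonneg a))) (abs_nonneg _) (by norm_num)
        _ = ‖a‖ * τ := by ring
    · show ‖‖x‖⁻¹ • x‖ ≤ 1
      rw [norm_unitproj hx0]
    · rw [mem_ball_zero_iff]
      linarith
  rw [sphMeas_apply hGm, ← mul_assoc, ENNReal.mul_inv_cancel volB_ne_zero volB_ne_top, one_mul]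
  calc ENNReal.ofReal (betaD d * τ) = volume R := hvolR.symm
    _ ≤ _ := measure_mono hsub

lemma volBr_pos : 0 < (volume (ball (0:V d) 1)).toReal :=
  ENNReal.toReal_pos volB_ne_zero volB_ne_top

lemma sphMeas_univ : sphMeas d univ = 1 := by
  rw [sphMeas_apply MeasurableSet.univ]
  simp [ENNReal.inv_mul_cancel volB_ne_zero volB_ne_top]

lemma sphMeas_le_one {s : Set (V d)} : sphMeas d s ≤ 1 := by
  rw [← sphMeas_univ]; exact measure_mono (subset_univ s)

lemma sphMeas_ne_top {s : Set (V d)} : sphMeas d s ≠ ⊤ :=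
  (sphMeas_le_one.trans_lt ENNReal.one_lt_top).ne

instance : IsFiniteMeasure (sphMeas d) :=
  ⟨by rw [sphMeas_univ]; exact ENNReal.one_lt_top⟩

lemma band_real (hd : 3 ≤ d) (a : V d) {τ : ℝ} (hτ : 0 < τ) (hτ' : τ ≤ 1/4) :
    betaD d * τ / (volume (ball (0:V d) 1)).toReal ≤
      (sphMeas d {σ : V d | |⟪a, σ⟫| ≤ ‖a‖ * τ ∧ ‖σ‖ ≤ 1}).toReal := by
  have h := band_lemma hd a hτ hτ'
  have hfin : volume (ball (0:V d) 1) *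
      sphMeas d {σ : V d | |⟪a, σ⟫| ≤ ‖a‖ * τ ∧ ‖σ‖ ≤ 1} ≠ ⊤ :=
    ENNReal.mul_ne_top volB_ne_top sphMeas_ne_top
  have h2 := ENNReal.toReal_mono hfin h
  rw [ENNReal.toReal_ofReal (mul_nonneg (betaD_pos hd).le hτ.le), ENNReal.toReal_mul] at h2
  rw [div_le_iff₀ volBr_pos]
  linarith [h2]

lemma sphMeas_norm_ne_one (hd : 3 ≤ d) : sphMeas d {σ : V d | ‖σ‖ ≠ 1} = 0 := by
  haveI : Nonempty (Fin d) := ⟨⟨0, by omega⟩⟩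
  haveI : Nontrivial (V d) := inferInstance
  have hs : MeasurableSet {σ : V d | ‖σ‖ ≠ 1} :=
    (measurable_norm (measurableSet_singleton (1:ℝ)).compl)
  rw [sphMeas_apply hs]
  have hsub : (fun x : V d => ‖x‖⁻¹ • x) ⁻¹' {σ : V d | ‖σ‖ ≠ 1} ∩ ball 0 1 ⊆ {0} := by
    intro x hx
    by_contra h
    exact hx.1 (norm_unitproj h)
  have h0 : volume ((fun x : V d => ‖x‖⁻¹ • x) ⁻¹' {σ : V d | ‖σ‖ ≠ 1} ∩ ball 0 1) = 0 :=
    le_antisymm ((measure_mono hsub).trans (by simp)) zero_le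
  rw [h0, mul_zero]

/-- The set of good collision directions. -/
def Sset (v₀ : V d) (δ : ℝ) (ξ w : V d) : Set (V d) :=
  {σ | vP ξ w σ ∈ closedBall v₀ δ ∧ vPs ξ w σ ∈ closedBall v₀ δ}

lemma continuous_vP (ξ w : V d) : Continuous fun σ : V d => vP ξ w σ := by
  unfold vP
  exact continuous_const.add (continuous_const_smul _)

lemma continuous_vPs (ξ w : V d) : Continuous fun σ : V d => vPs ξ w σ := by
  unfold vPs
  exact continuous_const.sub (continuous_const_smul _)

lemma measurableSet_Sset (v₀ : V d) (δ : ℝ) (ξ w : V d) :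
    MeasurableSet (Sset v₀ δ ξ w) := by
  rw [Sset, Set.setOf_and]
  exact ((continuous_vP ξ w).measurable measurableSet_closedBall).inter
    ((continuous_vPs ξ w).measurable measurableSet_closedBall)

lemma inner_integral_eq (v₀ : V d) (δ : ℝ) (ξ w : V d) :
    (∫ σ, ‖ξ - w‖ * (((closedBall v₀ δ).indicator (fun _ => (1:ℝ)) (vP ξ w σ)) *
        ((closedBall v₀ δ).indicator (fun _ => (1:ℝ)) (vPs ξ w σ))) ∂(sphMeas d))
      = ‖ξ - w‖ * (sphMeas d (Sset v₀ δ ξ w)).toReal := by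
  have hfe : (fun σ => ‖ξ - w‖ * (((closedBall v₀ δ).indicator (fun _ => (1:ℝ)) (vP ξ w σ)) *
      ((closedBall v₀ δ).indicator (fun _ => (1:ℝ)) (vPs ξ w σ))))
      = (Sset v₀ δ ξ w).indicator (fun _ => ‖ξ - w‖) := by
    funext σ
    by_cases h : σ ∈ Sset v₀ δ ξ w
    · rw [Set.indicator_of_mem h.1, Set.indicator_of_mem h.2, Set.indicator_of_mem h,
        mul_one, mul_one]
    · rw [Set.indicator_of_notMem h]
      have h' := h
      simp only [Sset, mem_setOf_eq, not_and_or] at h'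
      rcases h' with h' | h'
      · rw [Set.indicator_of_notMem h', zero_mul, mul_zero]
      · rw [Set.indicator_of_notMem h', mul_zero, mul_zero]
  rw [hfe, integral_indicator_const _ (measurableSet_Sset v₀ δ ξ w), smul_eq_mul, mul_comm, measureReal_def]

lemma Qplus_ind_eq (v₀ : V d) (δ : ℝ) (ξ : V d) :
    Qplus ((closedBall v₀ δ).indicator fun _ => (1:ℝ))
        ((closedBall v₀ δ).indicator fun _ => (1:ℝ)) ξ
      = ∫ w, ‖ξ - w‖ * (sphMeas d (Sset v₀ δ ξ w)).toReal := by
  unfold Qplus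
  exact integral_congr_ae (ae_of_all _ fun w => inner_integral_eq v₀ δ ξ w)

lemma vP_sub (v₀ ξ w σ : V d) :
    vP ξ w σ - v₀ = ((2:ℝ)⁻¹ • (ξ + w) - v₀) + (‖ξ - w‖/2) • σ := by
  unfold vP; abel

lemma vPs_sub (v₀ ξ w σ : V d) :
    vPs ξ w σ - v₀ = ((2:ℝ)⁻¹ • (ξ + w) - v₀) - (‖ξ - w‖/2) • σ := by
  unfold vPs; abel

lemma two_smul_aa (v₀ ξ w : V d) :
    (2:ℝ) • ((2:ℝ)⁻¹ • (ξ + w) - v₀) = (ξ - v₀) + (w - v₀) := by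
  module

lemma norm_two_aa (v₀ ξ w : V d) :
    ‖(ξ - v₀) + (w - v₀)‖ = 2 * ‖(2:ℝ)⁻¹ • (ξ + w) - v₀‖ := by
  rw [← two_smul_aa v₀ ξ w, norm_smul]
  norm_num

lemma par_id (v₀ ξ w : V d) :
    4 * ‖(2:ℝ)⁻¹ • (ξ + w) - v₀‖^2 + ‖ξ - w‖^2
      = 2*‖ξ - v₀‖^2 + 2*‖w - v₀‖^2 := by
  have h := parallelogram_law_with_norm ℝ (ξ - v₀) (w - v₀)
  have h2 : ξ - v₀ - (w - v₀) = ξ - w := by abel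
  rw [h2, norm_two_aa v₀ ξ w] at h
  nlinarith [h]

lemma Sset_null (hd : 3 ≤ d) {v₀ ξ : V d} {δ : ℝ}
    (hξ : Real.sqrt 2 * δ < ‖ξ - v₀‖) (w : V d) :
    sphMeas d (Sset v₀ δ ξ w) = 0 := by
  apply measure_mono_null _ (sphMeas_norm_ne_one hd)
  intro σ hσ
  simp only [Sset, mem_setOf_eq, mem_closedBall_iff_norm] at hσ
  simp only [mem_setOf_eq]
  intro hσ1
  obtain ⟨h1, h2⟩ := hσ
  rw [vP_sub v₀ ξ w σ] at h1
  rw [vPs_sub v₀ ξ w σ] at h2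
  have hpid := par_id v₀ ξ w
  set aa := (2:ℝ)⁻¹ • (ξ + w) - v₀
  set b := (‖ξ - w‖/2) • σ with hb
  have hpar := parallelogram_law_with_norm ℝ aa b
  have hpar2 : ‖aa + b‖^2 + ‖aa - b‖^2 = 2*(‖aa‖^2 + ‖b‖^2) := by
    exact hpar
  have hbn : ‖b‖ = ‖ξ - w‖/2 := by
    rw [hb, norm_smul, Real.norm_eq_abs, abs_of_nonneg (by positivity), hσ1, mul_one]
  have hbn2 : ‖b‖^2 = (‖ξ - w‖/2)^2 := by rw [hbn]
  have hδ0 : 0 ≤ δ := by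
    by_contra h
    push_neg at h
    linarith [norm_nonneg (aa + b)]
  have hsq2 : Real.sqrt 2 ^ 2 = 2 := Real.sq_sqrt (by norm_num)
  have e1 : ‖aa + b‖^2 ≤ δ^2 := by
    rw [pow_two, pow_two]; exact mul_self_le_mul_self (norm_nonneg _) h1
  have e2 : ‖aa - b‖^2 ≤ δ^2 := by
    rw [pow_two, pow_two]; exact mul_self_le_mul_self (norm_nonneg _) h2
  have e3 : 2*δ^2 < ‖ξ - v₀‖^2 := by
    have := mul_self_lt_mul_self (mul_nonneg (Real.sqrt_nonneg 2) hδ0) hξ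
    nlinarith [hsq2]
  have hW := sq_nonneg ‖w - v₀‖
  linarith [hpar2, hbn2, hpid, e1, e2, e3, hW]

lemma Qplus_nonneg (v₀ : V d) (δ : ℝ) (ξ : V d) :
    0 ≤ Qplus ((closedBall v₀ δ).indicator fun _ => (1:ℝ))
        ((closedBall v₀ δ).indicator fun _ => (1:ℝ)) ξ := by
  rw [Qplus_ind_eq]
  exact integral_nonneg fun w => by positivity

lemma Qplus_zero_outside (hd : 3 ≤ d) {v₀ ξ : V d} {δ : ℝ}
    (hξ : Real.sqrt 2 * δ < ‖ξ - v₀‖) :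
    Qplus ((closedBall v₀ δ).indicator fun _ => (1:ℝ))
        ((closedBall v₀ δ).indicator fun _ => (1:ℝ)) ξ = 0 := by
  rw [Qplus_ind_eq]
  have h : ∀ w : V d, ‖ξ - w‖ * (sphMeas d (Sset v₀ δ ξ w)).toReal = 0 := fun w => by
    rw [Sset_null hd hξ w, ENNReal.toReal_zero, mul_zero]
  simp only [h, integral_zero]

lemma measurable_F (v₀ : V d) (δ : ℝ) (ξ : V d) :
    Measurable fun w : V d => ‖ξ - w‖ * (sphMeas d (Sset v₀ δ ξ w)).toReal := by
  have hvP : Continuous fun p : V d × V d => vP ξ p.1 p.2 := by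
    unfold vP
    fun_prop
  have hvPs : Continuous fun p : V d × V d => vPs ξ p.1 p.2 := by
    unfold vPs
    fun_prop
  have hT : MeasurableSet {p : V d × V d |
      vP ξ p.1 p.2 ∈ closedBall v₀ δ ∧ vPs ξ p.1 p.2 ∈ closedBall v₀ δ} := by
    rw [Set.setOf_and]
    exact (hvP.measurable measurableSet_closedBall).inter
      (hvPs.measurable measurableSet_closedBall)
  have hm := measurable_measure_prodMk_left (ν := sphMeas d) hT
  exact ((measurable_const.sub measurable_id).norm).mul hm.ennreal_toReal

lemma F_le (v₀ : V d) {δ : ℝ} (hδ : 0 < δ) (ξ w : V d) :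
    ‖ξ - w‖ * (sphMeas d (Sset v₀ δ ξ w)).toReal ≤
      (closedBall ((2:ℝ) • v₀ - ξ) (2*δ)).indicator
        (fun _ => 2*‖ξ - v₀‖ + 2*δ) w := by
  by_cases hw : w ∈ closedBall ((2:ℝ) • v₀ - ξ) (2*δ)
  · rw [Set.indicator_of_mem hw]
    have h1 : (sphMeas d (Sset v₀ δ ξ w)).toReal ≤ 1 := by
      have := ENNReal.toReal_mono ENNReal.one_ne_top
        (sphMeas_le_one (s := Sset v₀ δ ξ w))
      simpa using this
    have h2 : ‖ξ - w‖ ≤ 2*‖ξ - v₀‖ + 2*δ := by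
      rw [mem_closedBall_iff_norm] at hw
      have hsplit : ξ - w = (ξ - ((2:ℝ)•v₀ - ξ)) - (w - ((2:ℝ)•v₀ - ξ)) := by abel
      have h3 : ξ - ((2:ℝ)•v₀ - ξ) = (2:ℝ) • (ξ - v₀) := by module
      calc ‖ξ - w‖ ≤ ‖ξ - ((2:ℝ)•v₀ - ξ)‖ + ‖w - ((2:ℝ)•v₀ - ξ)‖ := by
            rw [hsplit]; exact norm_sub_le _ _
        _ ≤ 2*‖ξ - v₀‖ + 2*δ := by
            rw [h3, norm_smul, Real.norm_eq_abs]
            have : |(2:ℝ)| = 2 := by norm_num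
            rw [this]
            linarith
    calc ‖ξ - w‖ * (sphMeas d (Sset v₀ δ ξ w)).toReal ≤ (2*‖ξ - v₀‖ + 2*δ) * 1 :=
          mul_le_mul h2 h1 ENNReal.toReal_nonneg (by positivity)
      _ = 2*‖ξ - v₀‖ + 2*δ := mul_one _
  · rw [Set.indicator_of_notMem hw]
    have hS : Sset v₀ δ ξ w = ∅ := by
      rw [Set.eq_empty_iff_forall_notMem]
      intro σ hσ
      obtain ⟨ha, hb⟩ := hσ
      apply hw
      rw [mem_closedBall_iff_norm] at ha hb hw ⊢
      have hsum : w - ((2:ℝ)•v₀ - ξ) = (vP ξ w σ - v₀) + (vPs ξ w σ - v₀) := by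
        unfold vP vPs
        module
      calc ‖w - ((2:ℝ)•v₀ - ξ)‖ = ‖(vP ξ w σ - v₀) + (vPs ξ w σ - v₀)‖ := by rw [hsum]
        _ ≤ ‖vP ξ w σ - v₀‖ + ‖vPs ξ w σ - v₀‖ := norm_add_le _ _
        _ ≤ 2*δ := by linarith
    refine le_of_eq ?_
    rw [hS, measure_empty, ENNReal.toReal_zero, mul_zero]

lemma integrable_F (v₀ : V d) {δ : ℝ} (hδ : 0 < δ) (ξ : V d) :
    Integrable (fun w : V d => ‖ξ - w‖ * (sphMeas d (Sset v₀ δ ξ w)).toReal) := by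
  have hg : Integrable ((closedBall ((2:ℝ) • v₀ - ξ) (2*δ)).indicator
      (fun _ => 2*‖ξ - v₀‖ + 2*δ)) :=
    (integrableOn_const measure_closedBall_lt_top.ne).integrable_indicator
      measurableSet_closedBall
  refine hg.mono' (measurable_F v₀ δ ξ).aestronglyMeasurable (ae_of_all _ fun w => ?_)
  rw [Real.norm_eq_abs, abs_of_nonneg (by positivity)]
  exact F_le v₀ hδ ξ w

set_option maxHeartbeats 1000000 in
lemma geom_main (hd : 3 ≤ d) {v₀ ξ : V d} {δ χ : ℝ} (hδ : 0 < δ) (hχ0 : 0 < χ) (hχ1 : χ < 1)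
    (hξ : ‖ξ - v₀‖ ≤ (1 - χ) * (Real.sqrt 2 * δ)) {w : V d}
    (hw : ‖w - v₀‖ ≤ Real.sqrt χ * δ / 2) {σ : V d} (hσn : ‖σ‖ ≤ 1)
    (hστ : |⟪(2:ℝ)⁻¹ • (ξ + w) - v₀, σ⟫| ≤ ‖(2:ℝ)⁻¹ • (ξ + w) - v₀‖ * (χ/4)) :
    σ ∈ Sset v₀ δ ξ w := by
  have hs2 : Real.sqrt 2 ≤ 3/2 := by
    rw [show (3/2:ℝ) = Real.sqrt ((3/2)^2) from (Real.sqrt_sq (by norm_num)).symm]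
    exact Real.sqrt_le_sqrt (by norm_num)
  have hs2' : 0 ≤ Real.sqrt 2 := Real.sqrt_nonneg 2
  have hsχ1 : Real.sqrt χ ≤ 1 := Real.sqrt_le_one.mpr hχ1.le
  have hsχ0 : 0 ≤ Real.sqrt χ := Real.sqrt_nonneg χ
  have hsqχ : Real.sqrt χ ^ 2 = χ := Real.sq_sqrt hχ0.le
  have hsq2 : Real.sqrt 2 ^ 2 = 2 := Real.sq_sqrt (by norm_num)
  have hpid := par_id v₀ ξ w
  set aa := (2:ℝ)⁻¹ • (ξ + w) - v₀ with haa
  set r := ‖ξ - w‖ with hr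
  have hu0 : 0 ≤ ‖ξ - v₀‖ := norm_nonneg _
  have huB : ‖ξ - v₀‖ ≤ 3/2 * δ := by nlinarith [hξ, mul_nonneg hs2' hδ.le]
  have heB : ‖w - v₀‖ ≤ δ/2 := by nlinarith [hw]
  have hrB : r ≤ 2*δ := by
    have h1 : ξ - w = (ξ - v₀) - (w - v₀) := by abel
    rw [hr, h1]
    calc ‖(ξ - v₀) - (w - v₀)‖ ≤ ‖ξ - v₀‖ + ‖w - v₀‖ := norm_sub_le _ _
      _ ≤ 2*δ := by linarith
  have hr0 : 0 ≤ r := norm_nonneg _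
  have haaB : ‖aa‖ ≤ δ := by
    have h1 : 2*‖aa‖ = ‖(ξ - v₀) + (w - v₀)‖ := (norm_two_aa v₀ ξ w).symm
    have h2 := norm_add_le (ξ - v₀) (w - v₀)
    linarith
  have hIP : |⟪aa, σ⟫| ≤ δ * (χ/4) :=
    hστ.trans (mul_le_mul_of_nonneg_right haaB (by positivity))
  have hu2 : ‖ξ - v₀‖^2 ≤ (1-χ)^2 * (2*δ^2) := by
    have h := mul_self_le_mul_self hu0 hξ
    nlinarith [hsq2]
  have he2 : ‖w - v₀‖^2 ≤ χ*δ^2/4 := by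
    have h := mul_self_le_mul_self (norm_nonneg (w - v₀)) hw
    nlinarith [hsqχ]
  have hbase : ‖aa‖^2 + (r/2)^2 ≤ (1-χ)^2*δ^2 + χ*δ^2/8 := by nlinarith [hpid, hu2, he2]
  have hσ2 : ‖σ‖^2 ≤ 1 := by nlinarith [norm_nonneg σ]
  have hcross : r * |⟪aa,σ⟫| ≤ 2*δ*(δ*(χ/4)) :=
    mul_le_mul hrB hIP (abs_nonneg _) (by positivity)
  have hχ2δ : χ^2*δ^2 ≤ χ*δ^2 := by nlinarith [sq_nonneg δ]
  constructor
  · show vP ξ w σ ∈ closedBall v₀ δ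
    rw [mem_closedBall_iff_norm, vP_sub v₀ ξ w σ, ← haa, ← hr]
    have hexp : ‖aa + (r/2) • σ‖^2 = ‖aa‖^2 + r*⟪aa,σ⟫ + (r/2)^2*‖σ‖^2 := by
      rw [@norm_add_sq_real, real_inner_smul_right, norm_smul, Real.norm_eq_abs,
        abs_of_nonneg (by positivity), mul_pow]
      ring
    have h5 : r*⟪aa,σ⟫ ≤ r*|⟪aa,σ⟫| := mul_le_mul_of_nonneg_left (le_abs_self _) hr0
    have h7 : (r/2)^2*‖σ‖^2 ≤ (r/2)^2 := mul_le_of_le_one_right (sq_nonneg _) hσ2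
    have hle : ‖aa + (r/2) • σ‖^2 ≤ δ^2 := by nlinarith [hexp, hbase, hcross, hχ2δ]
    calc ‖aa + (r/2) • σ‖ = Real.sqrt (‖aa + (r/2) • σ‖^2) :=
          (Real.sqrt_sq (norm_nonneg _)).symm
      _ ≤ Real.sqrt (δ^2) := Real.sqrt_le_sqrt hle
      _ = δ := Real.sqrt_sq hδ.le
  · show vPs ξ w σ ∈ closedBall v₀ δ
    rw [mem_closedBall_iff_norm, vPs_sub v₀ ξ w σ, ← haa, ← hr]
    have hexp : ‖aa - (r/2) • σ‖^2 = ‖aa‖^2 - r*⟪aa,σ⟫ + (r/2)^2*‖σ‖^2 := by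
      rw [@norm_sub_sq_real, real_inner_smul_right, norm_smul, Real.norm_eq_abs,
        abs_of_nonneg (by positivity), mul_pow]
      ring
    have h5 : -(r*⟪aa,σ⟫) ≤ r*|⟪aa,σ⟫| := by
      have := mul_le_mul_of_nonneg_left (neg_abs_le ⟪aa,σ⟫) hr0
      nlinarith [this]
    have h7 : (r/2)^2*‖σ‖^2 ≤ (r/2)^2 := mul_le_of_le_one_right (sq_nonneg _) hσ2
    have hle : ‖aa - (r/2) • σ‖^2 ≤ δ^2 := by nlinarith [hexp, hbase, hcross, hχ2δ]
    calc ‖aa - (r/2) • σ‖ = Real.sqrt (‖aa - (r/2) • σ‖^2) :=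
          (Real.sqrt_sq (norm_nonneg _)).symm
      _ ≤ Real.sqrt (δ^2) := Real.sqrt_le_sqrt hle
      _ = δ := Real.sqrt_sq hδ.le

lemma exists_unit_anti (hd : 3 ≤ d) (u : V d) : ∃ ν : V d, ‖ν‖ = 1 ∧ ⟪u, ν⟫ ≤ 0 := by
  rcases eq_or_ne u 0 with rfl | hu
  · refine ⟨EuclideanSpace.single ⟨0, by omega⟩ (1:ℝ), ?_, ?_⟩
    · simp [EuclideanSpace.norm_single]
    · simp
  · refine ⟨-(‖u‖⁻¹ • u), by rw [norm_neg]; exact norm_unitproj hu, ?_⟩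
    rw [inner_neg_right, real_inner_smul_right]
    have h := mul_nonneg (inv_nonneg.2 (norm_nonneg u)) (real_inner_self_nonneg (x := u))
    linarith

set_option maxHeartbeats 1000000 in
lemma main_lower (hd : 3 ≤ d) {χ : ℝ} (hχ : χ ∈ Set.Ioo (0:ℝ) 1) (v₀ : V d) {δ : ℝ}
    (hδ : 0 < δ) (ξ : V d) (hξ : ξ ∈ closedBall v₀ ((1 - χ) * (Real.sqrt 2 * δ))) :
    betaD d / (16 * 8^d) * δ^(d+1) * χ^(d+1) ≤
      Qplus ((closedBall v₀ δ).indicator fun _ => (1:ℝ))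
        ((closedBall v₀ δ).indicator fun _ => (1:ℝ)) ξ := by
  obtain ⟨hχ0, hχ1⟩ := hχ
  rw [mem_closedBall_iff_norm] at hξ
  obtain ⟨ν, hν1, hνu⟩ := exists_unit_anti hd (ξ - v₀)
  have hβ := betaD_pos hd
  have hsχ0 : 0 < Real.sqrt χ := Real.sqrt_pos.2 hχ0
  have hsχ1 : Real.sqrt χ ≤ 1 := Real.sqrt_le_one.mpr hχ1.le
  have hsqχ : Real.sqrt χ ^ 2 = χ := Real.sq_sqrt hχ0.le
  set ρ := Real.sqrt χ * δ / 2 with hρ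
  have hρ0 : 0 < ρ := by rw [hρ]; positivity
  set z := v₀ + (3*ρ/4) • ν with hz
  set ωr := (volume (ball (0:V d) 1)).toReal with hω
  have hωr : 0 < ωr := volBr_pos
  set K := (ρ/2) * (betaD d * (χ/4) / ωr) with hK
  have hc : 0 ≤ betaD d * (χ/4) / ωr :=
    div_nonneg (mul_nonneg hβ.le (by positivity)) hωr.le
  have hptw : ∀ w ∈ closedBall z (ρ/4),
      K ≤ ‖ξ - w‖ * (sphMeas d (Sset v₀ δ ξ w)).toReal := by
    intro w hw
    rw [mem_closedBall_iff_norm] at hw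
    have hwv : ‖w - v₀‖ ≤ ρ := by
      have h1 : w - v₀ = (w - z) + (3*ρ/4) • ν := by rw [hz]; module
      rw [h1]
      calc ‖(w - z) + (3*ρ/4) • ν‖ ≤ ‖w - z‖ + ‖(3*ρ/4) • ν‖ := norm_add_le _ _
        _ ≤ ρ/4 + 3*ρ/4 := by
            rw [norm_smul, Real.norm_eq_abs, abs_of_nonneg (by positivity), hν1, mul_one]
            linarith
        _ = ρ := by ring
    have hξz2 : (3*ρ/4)^2 ≤ ‖ξ - z‖^2 := by
      have h1 : ξ - z = (ξ - v₀) - (3*ρ/4) • ν := by rw [hz]; module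
      rw [h1, @norm_sub_sq_real, real_inner_smul_right, norm_smul, Real.norm_eq_abs,
        abs_of_nonneg (by positivity), hν1, mul_one]
      nlinarith [sq_nonneg ‖ξ - v₀‖, mul_nonneg (by positivity : (0:ℝ) ≤ 2*(3*ρ/4))
        (neg_nonneg.2 hνu)]
    have hrlb : ρ/2 ≤ ‖ξ - w‖ := by
      have h2 : ‖ξ - z‖ ≤ ‖ξ - w‖ + ‖w - z‖ := by
        have h3 : ξ - z = (ξ - w) + (w - z) := by abel
        rw [h3]; exact norm_add_le _ _
      have h4 : 3*ρ/4 ≤ ‖ξ - z‖ := by nlinarith [norm_nonneg (ξ - z), hρ0]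
      linarith
    have hsub : {σ : V d | |⟪(2:ℝ)⁻¹ • (ξ + w) - v₀, σ⟫| ≤
        ‖(2:ℝ)⁻¹ • (ξ + w) - v₀‖ * (χ/4) ∧ ‖σ‖ ≤ 1} ⊆ Sset v₀ δ ξ w := by
      intro σ hσ
      exact geom_main hd hδ hχ0 hχ1 hξ (by rw [hρ] at hwv; exact hwv) hσ.2 hσ.1
    have hmeasG := band_real hd ((2:ℝ)⁻¹ • (ξ + w) - v₀) (τ := χ/4)
      (by positivity) (by linarith)
    have hmono := ENNReal.toReal_mono (sphMeas_ne_top (s := Sset v₀ δ ξ w))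
      (measure_mono hsub)
    rw [hK]
    exact mul_le_mul hrlb (le_trans hmeasG hmono) hc (norm_nonneg _)
  have hind : ∀ w : V d, (closedBall z (ρ/4)).indicator (fun _ => K) w ≤
      ‖ξ - w‖ * (sphMeas d (Sset v₀ δ ξ w)).toReal := fun w => by
    by_cases hw : w ∈ closedBall z (ρ/4)
    · rw [Set.indicator_of_mem hw]; exact hptw w hw
    · rw [Set.indicator_of_notMem hw]; positivity
  rw [Qplus_ind_eq v₀ δ ξ]
  have hIind : Integrable ((closedBall z (ρ/4)).indicator fun _ => K) :=
    (integrableOn_const measure_closedBall_lt_top.ne).integrable_indicator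
      measurableSet_closedBall
  have hInt := integral_mono hIind (integrable_F v₀ hδ ξ) hind
  rw [integral_indicator_const _ measurableSet_closedBall] at hInt
  refine le_trans ?_ hInt
  have hvol : (volume (closedBall z (ρ/4))).toReal = (ρ/4)^d * ωr := by
    rw [Measure.addHaar_closedBall volume z (by positivity : (0:ℝ) ≤ ρ/4),
      ENNReal.toReal_mul, ENNReal.toReal_ofReal (by positivity)]
    congr 2
    exact finrank_euclideanSpace_fin
  rw [smul_eq_mul, measureReal_def, hvol]
  have hkey : χ^(d+1) ≤ (Real.sqrt χ)^(d+1) * χ := by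
    have h1 : χ^(d+1) = (Real.sqrt χ)^(2*d+2) := by
      rw [show 2*d+2 = 2*(d+1) by ring, pow_mul, Real.sq_sqrt hχ0.le]
    have h2 : (Real.sqrt χ)^(d+1) * χ = (Real.sqrt χ)^(d+3) := by
      calc (Real.sqrt χ)^(d+1) * χ = (Real.sqrt χ)^(d+1) * (Real.sqrt χ)^2 := by rw [hsqχ]
        _ = (Real.sqrt χ)^(d+3) := by rw [← pow_add]
    rw [h1, h2]
    exact pow_le_pow_of_le_one hsχ0.le hsχ1 (by omega)
  have heq : ((ρ/4)^d * ωr) * K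
      = betaD d / (16 * 8^d) * δ^(d+1) * ((Real.sqrt χ)^(d+1) * χ) := by
    rw [hK, hρ]
    have h8 : (0:ℝ) < 8^d := by positivity
    have h8' : (1/8:ℝ)^d * 8^d = 1 := by rw [← mul_pow]; norm_num
    field_simp
    linear_combination (Real.sqrt χ * Real.sqrt χ ^ d * δ * δ ^ d * 16) * h8'
  rw [heq]
  exact mul_le_mul_of_nonneg_left hkey (by positivity)


end SpreadProof

/-- Proposition `spread`, spreading property of `Q₊`. For any
`v₀ ∈ ℝ^d` and `δ > 0`, the support of `Q₊(𝟏_{B(v₀,δ)}, 𝟏_{B(v₀,δ)})` is the ball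
`B(v₀,√2 δ)`, and for any `0 < χ < 1` there is a universal `κ₀ > 0` (depending only on
`d`) such that
`Q₊(𝟏_{B(v₀,δ)}, 𝟏_{B(v₀,δ)}) ≥ κ₀ δ^{d+1} χ^{d+1} 𝟏_{B(v₀,(1-χ)√2 δ)}` for all `δ > 0`. -/
theorem Qplus_spreading (d : ℕ) (hd : 3 ≤ d) :
    (∀ (v₀ : V d) (δ : ℝ), 0 < δ →
      tsupport (fun ξ => Qplus ((closedBall v₀ δ).indicator fun _ => (1:ℝ))
          ((closedBall v₀ δ).indicator fun _ => (1:ℝ)) ξ)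
        = closedBall v₀ (Real.sqrt 2 * δ)) ∧
    ∃ κ₀ > (0:ℝ), ∀ χ ∈ Set.Ioo (0:ℝ) 1, ∀ (v₀ : V d) (δ : ℝ), 0 < δ → ∀ ξ : V d,
      κ₀ * δ ^ (d + 1) * χ ^ (d + 1) *
          (closedBall v₀ ((1 - χ) * (Real.sqrt 2 * δ))).indicator (fun _ => (1:ℝ)) ξ ≤
        Qplus ((closedBall v₀ δ).indicator fun _ => (1:ℝ))
          ((closedBall v₀ δ).indicator fun _ => (1:ℝ)) ξ := by
  constructor
  · intro v₀ δ hδ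
    have hs2 : 0 < Real.sqrt 2 := Real.sqrt_pos.2 (by norm_num)
    have h2δ : 0 < Real.sqrt 2 * δ := by positivity
    refine Set.Subset.antisymm ?_ ?_
    · refine closure_minimal ?_ Metric.isClosed_closedBall
      intro ξ hξ
      simp only [Function.mem_support] at hξ
      by_contra hmem
      rw [Metric.mem_closedBall, not_le, dist_eq_norm] at hmem
      exact hξ (Qplus_zero_outside hd hmem)
    · haveI : Nonempty (Fin d) := ⟨⟨0, by omega⟩⟩
      haveI : Nontrivial (V d) := inferInstance
      rw [← closure_ball v₀ (ne_of_gt h2δ)]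
      apply closure_mono
      intro ξ hξ
      rw [mem_ball, dist_eq_norm] at hξ
      have hu0 := norm_nonneg (ξ - v₀)
      set χ := (1 - ‖ξ - v₀‖/(Real.sqrt 2 * δ))/2 with hχdef
      have hfrac1 : ‖ξ - v₀‖/(Real.sqrt 2 * δ) < 1 := (div_lt_one h2δ).2 hξ
      have hfrac0 : 0 ≤ ‖ξ - v₀‖/(Real.sqrt 2 * δ) := by positivity
      have hχ0 : 0 < χ := by rw [hχdef]; linarith
      have hχ1 : χ < 1 := by rw [hχdef]; linarith
      have hmem : ξ ∈ closedBall v₀ ((1-χ)*(Real.sqrt 2 * δ)) := by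
        rw [mem_closedBall_iff_norm, hχdef]
        have h2 : ‖ξ - v₀‖/(Real.sqrt 2 * δ) * (Real.sqrt 2 * δ) = ‖ξ - v₀‖ :=
          div_mul_cancel₀ _ (ne_of_gt h2δ)
        nlinarith [hξ]
      have hpos := main_lower hd ⟨hχ0, hχ1⟩ v₀ hδ ξ hmem
      rw [Function.mem_support]
      have hβ := betaD_pos hd
      have hlt : 0 < betaD d/(16*8^d) * δ^(d+1) * χ^(d+1) := by positivity
      exact ne_of_gt (lt_of_lt_of_le hlt hpos)
  · refine ⟨betaD d/(16*8^d), by have := betaD_pos hd; positivity, ?_⟩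
    intro χ hχ v₀ δ hδ ξ
    by_cases hmem : ξ ∈ closedBall v₀ ((1-χ)*(Real.sqrt 2 * δ))
    · rw [Set.indicator_of_mem hmem, mul_one]
      exact main_lower hd hχ v₀ hδ ξ hmem
    · rw [Set.indicator_of_notMem hmem, mul_zero]
      exact Qplus_nonneg v₀ δ ξ
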